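/- arXiv:2001.02138 — 3 statements merged into one kernel-verified Lean document; each statement's English description precedes it below -/
import Mathlib

section
/- For any sequence (e_1, ..., e_n) of non-negative integers, the determinant [e_1, ..., e_n] := det(x_j^{p^{e_i}})_{1≤i,j≤n} in F_p[x_1,...,x_n] is divisible by the determinant L_n := [0,1,...,n-1]. -/
open MvPolynomial Matrix Finset

/-- `[e₁,…,eₙ]`: the determinant of the matrix with `(k,j)`-entry `x_j^{p^{e_k}}`. -/
noncomputable def bracket (p n : ℕ) (e : Fin n → ℕ) : MvPolynomial (Fin n) (ZMod p) :=
  (Matrix.of fun k j : Fin n => (X j : MvPolynomial (Fin n) (ZMod p)) ^ p ^ (e k)).det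

/-- `L_n = [0,1,…,n-1]`. -/
noncomputable def Ln (p n : ℕ) : MvPolynomial (Fin n) (ZMod p) :=
  bracket p n (fun k => (k : ℕ))

/-- `L_{n,s} = [0,1,…,ŝ,…,n]` (entry `s` omitted from `0,…,n`). -/
noncomputable def Lns (p n s : ℕ) : MvPolynomial (Fin n) (ZMod p) :=
  bracket p n (fun k => if (k : ℕ) < s then (k : ℕ) else (k : ℕ) + 1)

/-- The `i`-th primitive Steenrod–Milnor operation, as the `F_p`-derivation
with `D_i(x_j) = x_j^{p^i}`. -/
noncomputable def Dop (p n i : ℕ) :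
    Derivation (ZMod p) (MvPolynomial (Fin n) (ZMod p)) (MvPolynomial (Fin n) (ZMod p)) :=
  MvPolynomial.mkDerivation (ZMod p) (fun j : Fin n => (X j) ^ p ^ i)

/-- The action of a matrix `g` on `P_n` by linear substitution of the variables. -/
noncomputable def act (p n : ℕ) (g : Matrix (Fin n) (Fin n) (ZMod p)) :
    MvPolynomial (Fin n) (ZMod p) →ₐ[ZMod p] MvPolynomial (Fin n) (ZMod p) :=
  MvPolynomial.aeval (fun j : Fin n => ∑ k : Fin n, g j k • (X k : MvPolynomial (Fin n) (ZMod p)))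

/- ### Auxiliary material -/

lemma dvd_det_of_col {R : Type*} [CommRing R] {m : Type*} [DecidableEq m] [Fintype m]
    (M : Matrix m m R) (j0 : m) (d : R) (h : ∀ k, d ∣ M k j0) : d ∣ M.det := by
  rw [Matrix.det_apply']
  refine Finset.dvd_sum fun σ _ => ?_
  exact Dvd.dvd.mul_left
    ((h (σ j0)).trans (Finset.dvd_prod_of_mem (fun i => M (σ i) i) (Finset.mem_univ j0))) _

lemma eq_C_mul_of_dvd {σ : Type*} [Fintype σ] {K : Type*} [Field K]
    {f g : MvPolynomial σ K} {N : ℕ} (hf : f.IsHomogeneous N) (hg : g.IsHomogeneous N)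
    (hdvd : g ∣ f) : ∃ c : K, f = C c * g := by
  obtain ⟨q, hq⟩ := hdvd
  refine ⟨coeff 0 q, ?_⟩
  have hfq : f = ∑ i ∈ Finset.range (q.totalDegree + 1), g * homogeneousComponent i q := by
    rw [hq, ← Finset.mul_sum, sum_homogeneousComponent]
  have happ := congrArg (homogeneousComponent N) hfq
  rw [map_sum] at happ
  have hfix : homogeneousComponent N f = f := by
    have := homogeneousComponent_of_mem (m := N) ((mem_homogeneousSubmodule N f).2 hf)
    rwa [if_pos rfl] at this
  have hterm : ∀ i ∈ Finset.range (q.totalDegree + 1),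
      homogeneousComponent N (g * homogeneousComponent i q)
      = if i = 0 then g * homogeneousComponent 0 q else 0 := by
    intro i _
    have hgi : (g * homogeneousComponent i q).IsHomogeneous (N + i) :=
      hg.mul (homogeneousComponent_isHomogeneous i q)
    have := homogeneousComponent_of_mem (m := N) ((mem_homogeneousSubmodule (N + i) _).2 hgi)
    rw [this]
    by_cases hi : i = 0
    · subst hi; simp
    · rw [if_neg (by omega : ¬ N = N + i), if_neg hi]
  rw [Finset.sum_congr rfl hterm, Finset.sum_ite_eq' (Finset.range (q.totalDegree + 1)) 0,
    if_pos (Finset.mem_range.2 (Nat.succ_pos _))] at happ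
  rw [hfix] at happ
  rw [happ, homogeneousComponent_zero, mul_comm]

lemma prod_primes_dvd'' {α : Type*} [CommMonoidWithZero α] [IsCancelMulZero α] {ι : Type*} [DecidableEq ι]
    (s : Finset ι) (f : ι → α) (hp : ∀ i ∈ s, Prime (f i))
    (hnd : ∀ i ∈ s, ∀ j ∈ s, f i ∣ f j → i = j) :
    ∀ (z : α), (∀ i ∈ s, f i ∣ z) → (∏ i ∈ s, f i) ∣ z := by
  classical
  induction s using Finset.induction_on with
  | empty => intro z _; simpa using one_dvd z
  | @insert a s ha ih =>
    intro z hz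
    obtain ⟨w, hw⟩ := hz a (Finset.mem_insert_self a s)
    have hs : ∀ i ∈ s, f i ∣ w := by
      intro i hi
      have hiz : f i ∣ f a * w := hw ▸ hz i (Finset.mem_insert_of_mem hi)
      have hprime := hp i (Finset.mem_insert_of_mem hi)
      rcases hprime.2.2 _ _ hiz with h | h
      · exfalso
        have := hnd i (Finset.mem_insert_of_mem hi) a (Finset.mem_insert_self a s) h
        exact ha (this ▸ hi)
      · exact h
    have := ih (fun i hi => hp i (Finset.mem_insert_of_mem hi))
      (fun i hi j hj => hnd i (Finset.mem_insert_of_mem hi) j (Finset.mem_insert_of_mem hj)) w hs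
    rw [Finset.prod_insert ha, hw]
    exact mul_dvd_mul_left (f a) this

section
variable (p n : ℕ) [Fact p.Prime]

/-- The linear form `∑ aₖ xₖ`. -/
noncomputable def ell (a : Fin n → ZMod p) : MvPolynomial (Fin n) (ZMod p) :=
  ∑ k, C (a k) * X k

lemma ell_pow (a : Fin n → ZMod p) (t : ℕ) :
    (ell p n a) ^ p ^ t = ∑ k, C (a k) * (X k : MvPolynomial (Fin n) (ZMod p)) ^ p ^ t := by
  rw [ell, sum_pow_char_pow]
  refine Finset.sum_congr rfl fun k _ => ?_
  rw [mul_pow, ← C_pow, ZMod.pow_card_pow]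

lemma ell_homog (a : Fin n → ZMod p) : (ell p n a).IsHomogeneous 1 :=
  IsHomogeneous.sum _ _ _ fun _ _ => isHomogeneous_C_mul_X _ _

lemma coeff_ell (a : Fin n → ZMod p) (k : Fin n) :
    coeff (Finsupp.single k 1) (ell p n a) = a k := by
  classical
  rw [ell, MvPolynomial.coeff_sum]
  rw [Finset.sum_eq_single k]
  · rw [coeff_C_mul, MvPolynomial.coeff_X]
    simp
  · intro j _ hj
    rw [coeff_C_mul, MvPolynomial.coeff_X', if_neg, mul_zero]
    intro hcon
    exact hj ((Finsupp.single_left_inj (one_ne_zero : (1:ℕ) ≠ 0)).1 hcon)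
  · intro h; exact absurd (Finset.mem_univ k) h

lemma ell_dvd_bracket (e : Fin n → ℕ) (a : Fin n → ZMod p) (j0 : Fin n) (ha : a j0 ≠ 0) :
    ell p n a ∣ bracket p n e := by
  set M : Matrix (Fin n) (Fin n) (MvPolynomial (Fin n) (ZMod p)) :=
    Matrix.of fun k j : Fin n => (X j : MvPolynomial (Fin n) (ZMod p)) ^ p ^ (e k) with hM
  have key := Matrix.det_updateCol_sum M j0
    (fun j => (C (a j) : MvPolynomial (Fin n) (ZMod p)))
  have hdvd : ell p n a ∣
      (M.updateCol j0 fun k =>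
        ∑ j, (C (a j) : MvPolynomial (Fin n) (ZMod p)) • M k j).det := by
    refine dvd_det_of_col _ j0 _ fun k => ?_
    rw [Matrix.updateCol_self]
    have : (∑ j, (C (a j) : MvPolynomial (Fin n) (ZMod p)) • M k j)
        = (ell p n a) ^ p ^ (e k) := by
      rw [ell_pow]
      refine Finset.sum_congr rfl fun j _ => ?_
      rw [smul_eq_mul, hM]
      rfl
    rw [this]
    exact dvd_pow_self _ (pow_ne_zero (e k) (Nat.Prime.ne_zero Fact.out))
  rw [key] at hdvd
  have hu : IsUnit (C (a j0) : MvPolynomial (Fin n) (ZMod p)) :=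
    ((isUnit_iff_ne_zero).2 ha).map C
  rw [smul_eq_mul] at hdvd
  exact (hu.dvd_mul_left).1 hdvd

lemma prime_X_mv (i : Fin n) : Prime (X i : MvPolynomial (Fin n) (ZMod p)) := by
  classical
  let e : Option {b : Fin n // b ≠ i} ≃ Fin n := Equiv.optionSubtypeNe i
  rw [← MulEquiv.prime_iff (renameEquiv (ZMod p) e.symm).toMulEquiv]
  have h1 : (renameEquiv (ZMod p) e.symm).toMulEquiv (X i) = X (e.symm i) := rename_X _ i
  rw [h1, Equiv.optionSubtypeNe_symm_self]
  rw [← MulEquiv.prime_iff (optionEquivLeft (ZMod p) {b : Fin n // b ≠ i}).toMulEquiv]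
  have h2 : (optionEquivLeft (ZMod p) {b : Fin n // b ≠ i}).toMulEquiv (X none) = Polynomial.X :=
    optionEquivLeft_X_none ..
  rw [h2]
  exact Polynomial.prime_X

lemma prime_ell (a : Fin n → ZMod p) (j0 : Fin n) (ha : a j0 ≠ 0) : Prime (ell p n a) := by
  classical
  set c : ZMod p := (a j0)⁻¹ with hc
  set S0 : MvPolynomial (Fin n) (ZMod p) := ∑ k ∈ Finset.univ.erase j0, C (c * a k) * X k with hS0
  have L'eq : C c * ell p n a = X j0 + S0 := by
    rw [ell, Finset.mul_sum]
    rw [← Finset.add_sum_erase _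
      (fun k => (C c : MvPolynomial (Fin n) (ZMod p)) * (C (a k) * X k)) (Finset.mem_univ j0)]
    have : (C c : MvPolynomial (Fin n) (ZMod p)) * (C (a j0) * X j0) = X j0 := by
      rw [← mul_assoc, ← C_mul, inv_mul_cancel₀ ha, C_1, one_mul]
    rw [this]
    congr 1
    refine Finset.sum_congr rfl fun k _ => ?_
    rw [← mul_assoc, ← C_mul]
  set u : Fin n → MvPolynomial (Fin n) (ZMod p) :=
    fun j => if j = j0 then X j0 + S0 else X j with hu
  set v : Fin n → MvPolynomial (Fin n) (ZMod p) :=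
    fun j => if j = j0 then X j0 - S0 else X j with hv
  have stab : ∀ w : Fin n → MvPolynomial (Fin n) (ZMod p), (∀ j, j ≠ j0 → w j = X j) →
      aeval w S0 = S0 := by
    intro w hw
    rw [hS0, map_sum]
    refine Finset.sum_congr rfl fun k hk => ?_
    simp only [_root_.map_mul, aeval_X, aeval_C, algebraMap_eq]
    rw [hw k (Finset.mem_erase.1 hk).1]
  have hvu : ∀ j, aeval (R := ZMod p) v (aeval (R := ZMod p) u (X j)) = X j := by
    intro j
    rw [aeval_X]
    by_cases h : j = j0
    · subst h
      rw [hu]; simp only [if_pos rfl, if_true]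
      rw [map_add, aeval_X, hv]
      simp only [if_pos rfl, if_true]
      rw [stab v (fun j hj => by rw [hv]; simp [hj])]
      ring
    · rw [hu]; simp only [if_neg h]; rw [aeval_X, hv]; simp only [if_neg h]
  have huv : ∀ j, aeval (R := ZMod p) u (aeval (R := ZMod p) v (X j)) = X j := by
    intro j
    rw [aeval_X]
    by_cases h : j = j0
    · subst h
      rw [hv]; simp only [if_pos rfl, if_true]
      rw [map_sub, aeval_X, hu]
      simp only [if_pos rfl, if_true]
      rw [stab u (fun j hj => by rw [hu]; simp [hj])]
      ring
    · rw [hv]; simp only [if_neg h]; rw [aeval_X, hu]; simp only [if_neg h]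
  let E : MvPolynomial (Fin n) (ZMod p) ≃ₐ[ZMod p] MvPolynomial (Fin n) (ZMod p) :=
    AlgEquiv.ofAlgHom (aeval u) (aeval v)
      (MvPolynomial.algHom_ext fun j => by simpa using huv j)
      (MvPolynomial.algHom_ext fun j => by simpa using hvu j)
  have hprime : Prime (C c * ell p n a) := by
    have hX : Prime (X j0 : MvPolynomial (Fin n) (ZMod p)) := prime_X_mv p n j0
    rw [← MulEquiv.prime_iff (E.toRingEquiv.toMulEquiv)] at hX
    have : E.toRingEquiv.toMulEquiv (X j0) = X j0 + S0 := by
      show aeval u (X j0) = _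
      rw [aeval_X, hu]; simp
    rw [this] at hX
    rwa [L'eq]
  have hcu : IsUnit (C c : MvPolynomial (Fin n) (ZMod p)) := by
    refine (isUnit_iff_ne_zero.2 ?_).map C
    exact inv_ne_zero ha
  exact (associated_unit_mul_left (ell p n a) _ hcu).prime hprime

lemma bracket_homog (e : Fin n → ℕ) :
    (bracket p n e).IsHomogeneous (∑ i : Fin n, p ^ (e i)) := by
  rw [bracket, Matrix.det_apply']
  refine IsHomogeneous.sum _ _ _ fun σ _ => ?_
  have hprod : (∏ i : Fin n, (X i : MvPolynomial (Fin n) (ZMod p)) ^ p ^ (e (σ i))).IsHomogeneous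
      (∑ i : Fin n, p ^ (e (σ i))) :=
    IsHomogeneous.prod _ _ _ fun i _ => isHomogeneous_X_pow _ _
  have hcast : ((Equiv.Perm.sign σ : ℤ) : MvPolynomial (Fin n) (ZMod p))
      = C ((Equiv.Perm.sign σ : ℤ) : ZMod p) := by
    rw [← map_intCast (C : ZMod p →+* MvPolynomial (Fin n) (ZMod p))]
  have : (∑ i : Fin n, p ^ (e (σ i))) = ∑ i : Fin n, p ^ (e i) := Equiv.sum_comp σ fun i => p ^ e i
  rw [← this]
  have h2 := (hprod.C_mul ((Equiv.Perm.sign σ : ℤ) : ZMod p))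
  rw [hcast]
  exact h2

lemma Ln_coeff_one :
    coeff (Finsupp.equivFunOnFinite.symm fun i : Fin n => p ^ (i : ℕ))
      (bracket p n (fun k => (k : ℕ))) = 1 := by
  classical
  have hp2 : 2 ≤ p := (Fact.out : p.Prime).two_le
  set d0 : Fin n →₀ ℕ := Finsupp.equivFunOnFinite.symm fun i : Fin n => p ^ (i : ℕ) with hd0
  rw [bracket, Matrix.det_apply']
  have key : ∀ σ : Equiv.Perm (Fin n),
      (∏ i : Fin n, ((Matrix.of fun k j : Fin n =>
          (X j : MvPolynomial (Fin n) (ZMod p)) ^ p ^ ((k : Fin n) : ℕ)) (σ i) i))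
      = monomial (Finsupp.equivFunOnFinite.symm fun i : Fin n => p ^ ((σ i : Fin n) : ℕ)) 1 := by
    intro σ
    set dσ : Fin n →₀ ℕ :=
      Finsupp.equivFunOnFinite.symm fun i : Fin n => p ^ ((σ i : Fin n) : ℕ) with hdσ
    have hsupp : dσ.support = Finset.univ := by
      ext i
      simp only [Finsupp.mem_support_iff, Finset.mem_univ, iff_true]
      have : dσ i = p ^ ((σ i : Fin n) : ℕ) := rfl
      rw [this]
      positivity
    have := prod_X_pow_eq_monomial (s := dσ) (R := ZMod p)
    rw [hsupp] at this
    rw [← this]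
    rfl
  rw [Finset.sum_congr rfl (fun σ _ => by rw [key σ])]
  rw [MvPolynomial.coeff_sum]
  have hterm : ∀ σ : Equiv.Perm (Fin n),
      coeff d0 (((Equiv.Perm.sign σ : ℤ) : MvPolynomial (Fin n) (ZMod p)) *
        monomial (Finsupp.equivFunOnFinite.symm fun i : Fin n => p ^ ((σ i : Fin n) : ℕ)) 1)
      = if σ = 1 then 1 else 0 := by
    intro σ
    rw [← map_intCast (C : ZMod p →+* MvPolynomial (Fin n) (ZMod p)), C_mul_monomial, mul_one,
      coeff_monomial]
    by_cases hσ : σ = 1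
    · subst hσ
      rw [if_pos, if_pos rfl]
      · simp
      · rw [hd0]
        congr 1
    · rw [if_neg, if_neg hσ]
      intro hcon
      apply hσ
      have := Finsupp.equivFunOnFinite.symm.injective hcon
      ext i
      have hi := congrFun this i
      exact Nat.pow_right_injective hp2 hi
  rw [Finset.sum_congr rfl fun σ _ => hterm σ]
  rw [Finset.sum_ite_eq' Finset.univ (1 : Equiv.Perm (Fin n)) (fun _ => (1 : ZMod p))]
  simp

/-- Parametrization of normalized nonzero vectors (last nonzero coordinate is `1`). -/
def Fvec (x : Σ j : Fin n, (Fin (j : ℕ) → ZMod p)) : Fin n → ZMod p :=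
  fun i => if h : (i : ℕ) < (x.1 : ℕ) then x.2 ⟨i, h⟩ else if i = x.1 then 1 else 0

lemma Fvec_top (x : Σ j : Fin n, (Fin (j : ℕ) → ZMod p)) : Fvec p n x x.1 = 1 := by
  rw [Fvec, dif_neg (lt_irrefl _), if_pos rfl]

lemma Fvec_gt (x : Σ j : Fin n, (Fin (j : ℕ) → ZMod p)) (i : Fin n)
    (h : (x.1 : ℕ) < (i : ℕ)) : Fvec p n x i = 0 := by
  rw [Fvec, dif_neg (by omega), if_neg (fun hc => by rw [hc] at h; omega)]

lemma Fvec_inj : Function.Injective (Fvec p n) := by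
  intro x y hxy
  have hfst : x.1 = y.1 := by
    by_contra hne
    rcases lt_or_gt_of_ne hne with hlt | hlt
    · have h1 := congrFun hxy y.1
      rw [Fvec_gt p n x y.1 hlt, Fvec_top] at h1
      exact one_ne_zero h1.symm
    · have h1 := congrFun hxy x.1
      rw [Fvec_top, Fvec_gt p n y x.1 hlt] at h1
      exact one_ne_zero h1
  obtain ⟨j, f⟩ := x
  obtain ⟨j', f'⟩ := y
  simp only at hfst
  subst hfst
  have : f = f' := by
    funext i
    have h1 := congrFun hxy ⟨(i : ℕ), lt_trans i.isLt j.isLt⟩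
    rw [Fvec, Fvec] at h1
    simp only [dif_pos i.isLt] at h1
    convert h1
  rw [this]

lemma card_S : (Finset.image (Fvec p n) Finset.univ).card = ∑ k : Fin n, p ^ (k : ℕ) := by
  rw [Finset.card_image_of_injective _ (Fvec_inj p n), Finset.card_univ, Fintype.card_sigma]
  refine Finset.sum_congr rfl fun j _ => ?_
  rw [Fintype.card_fun]
  simp [ZMod.card]

end

theorem stmt0 (p n : ℕ) [Fact p.Prime] (hn : 1 ≤ n) (e : Fin n → ℕ) :
    Ln p n ∣ bracket p n e := by
  classical
  set S : Finset (Fin n → ZMod p) := Finset.image (Fvec p n) Finset.univ with hS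
  have hmem : ∀ a ∈ S, ∃ x : Σ j : Fin n, (Fin (j : ℕ) → ZMod p), Fvec p n x = a := by
    intro a ha
    obtain ⟨x, _, hx⟩ := Finset.mem_image.1 ha
    exact ⟨x, hx⟩
  have hnz : ∀ a ∈ S, ∃ j0, a j0 ≠ 0 := by
    intro a ha
    obtain ⟨x, hx⟩ := hmem a ha
    exact ⟨x.1, by rw [← hx, Fvec_top]; exact one_ne_zero⟩
  have hprime : ∀ a ∈ S, Prime (ell p n a) := by
    intro a ha
    obtain ⟨j0, hj0⟩ := hnz a ha
    exact prime_ell p n a j0 hj0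
  have hdvdall : ∀ (e' : Fin n → ℕ), ∀ a ∈ S, ell p n a ∣ bracket p n e' := by
    intro e' a ha
    obtain ⟨j0, hj0⟩ := hnz a ha
    exact ell_dvd_bracket p n e' a j0 hj0
  have hnd : ∀ a ∈ S, ∀ b ∈ S, ell p n a ∣ ell p n b → a = b := by
    intro a ha b hb hab
    obtain ⟨x, hx⟩ := hmem a ha
    obtain ⟨y, hy⟩ := hmem b hb
    obtain ⟨c, hc⟩ := eq_C_mul_of_dvd (ell_homog p n b) (ell_homog p n a) hab
    have hcoeff : ∀ k, b k = c * a k := by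
      intro k
      have := congrArg (coeff (Finsupp.single k 1)) hc
      rwa [coeff_ell, coeff_C_mul, coeff_ell] at this
    have hfst : x.1 = y.1 := by
      by_contra hne
      rcases lt_or_gt_of_ne hne with hlt | hlt
      · -- x.1 < y.1 : at index y.1 : b y.1 = 1, a y.1 = 0
        have h1 := hcoeff y.1
        rw [← hy, Fvec_top, ← hx, Fvec_gt p n x y.1 hlt, mul_zero] at h1
        exact one_ne_zero h1
      · -- y.1 < x.1 : at x.1 : b x.1 = 0, a x.1 = 1, so c = 0; then b y.1 = 1 = 0
        have h1 := hcoeff x.1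
        rw [← hy, Fvec_gt p n y x.1 hlt, ← hx, Fvec_top, mul_one] at h1
        have h2 := hcoeff y.1
        rw [← hy, Fvec_top, ← h1, zero_mul] at h2
        exact one_ne_zero h2
    have hc1 : c = 1 := by
      have h1 := hcoeff y.1
      rw [← hy, Fvec_top, ← hx, ← hfst, Fvec_top, mul_one] at h1
      exact h1.symm
    funext k
    rw [hcoeff k, hc1, one_mul]
  have hProd : ∀ (e' : Fin n → ℕ), (∏ a ∈ S, ell p n a) ∣ bracket p n e' := by
    intro e'
    exact prod_primes_dvd'' S (ell p n) hprime hnd _ (hdvdall e')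
  have hPhom : (∏ a ∈ S, ell p n a).IsHomogeneous (∑ k : Fin n, p ^ (k : ℕ)) := by
    have := IsHomogeneous.prod S (fun a => ell p n a) (fun _ => 1) (fun a _ => ell_homog p n a)
    rw [Finset.sum_const, smul_eq_mul, mul_one] at this
    have hcard : S.card = ∑ k : Fin n, p ^ (k : ℕ) := card_S p n
    rw [hcard] at this
    exact this
  have hLhom : (Ln p n).IsHomogeneous (∑ k : Fin n, p ^ (k : ℕ)) := by
    have := bracket_homog p n (fun k => (k : ℕ))
    exact this
  obtain ⟨c, hc⟩ := eq_C_mul_of_dvd hLhom hPhom (hProd (fun k => (k : ℕ)))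
  have hLn0 : Ln p n ≠ 0 := by
    intro h
    have h1 := Ln_coeff_one p n
    rw [show bracket p n (fun k => (k : ℕ)) = Ln p n from rfl, h] at h1
    simp at h1
  have hc0 : c ≠ 0 := by
    intro h
    rw [h, C_0, zero_mul] at hc
    exact hLn0 hc
  have hLP : Ln p n ∣ ∏ a ∈ S, ell p n a := by
    refine ⟨C c⁻¹, ?_⟩
    rw [hc, mul_comm (C c) _, mul_assoc, ← C_mul, mul_inv_cancel₀ hc0, C_1, mul_one]
  exact hLP.trans (hProd e)
end

section
/- The Dickson invariant Q_{n,0} equals L_n^{p-1}, where L_n = [0,1,...,n-1] and Q_{n,0} = [1,2,...,n]/L_n. -/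
open MvPolynomial Matrix Finset

lemma prodXpow (p n : ℕ) (f : Fin n → ℕ) :
    ∏ i : Fin n, (X i : MvPolynomial (Fin n) (ZMod p)) ^ f i
      = monomial (Finsupp.equivFunOnFinite.symm f) 1 := by
  rw [← prod_X_pow_eq_monomial]
  refine (Finset.prod_subset (Finset.subset_univ _) ?_).symm
  intro i _ hi
  simp only [Finsupp.mem_support_iff, ne_eq, not_not] at hi
  simp [show (Finsupp.equivFunOnFinite.symm f) i = f i from rfl] at hi ⊢
  simp [hi]

lemma Ln_ne_zero (p n : ℕ) [Fact p.Prime] : Ln p n ≠ 0 := by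
  have hp1 : 1 < p := (Fact.out : p.Prime).one_lt
  intro h
  have hc : coeff (Finsupp.equivFunOnFinite.symm fun k : Fin n => p ^ (k : ℕ)) (Ln p n)
      = 1 := by
    rw [Ln, bracket, Matrix.det_apply]
    have : ∀ σ : Equiv.Perm (Fin n),
        (∏ i, (Matrix.of fun k j : Fin n =>
          (X j : MvPolynomial (Fin n) (ZMod p)) ^ p ^ ((k : Fin n) : ℕ)) (σ i) i)
        = monomial (Finsupp.equivFunOnFinite.symm fun i : Fin n => p ^ ((σ i : Fin n) : ℕ)) 1 := by
      intro σ
      rw [← prodXpow p n (fun i => p ^ ((σ i : Fin n) : ℕ))]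
      rfl
    simp only [this]
    rw [coeff_sum]
    rw [Finset.sum_eq_single (1 : Equiv.Perm (Fin n))]
    · simp [coeff_monomial]
    · intro σ _ hσ
      have hne : (Finsupp.equivFunOnFinite.symm fun k : Fin n => p ^ (k : ℕ))
          ≠ (Finsupp.equivFunOnFinite.symm fun i : Fin n => p ^ ((σ i : Fin n) : ℕ)) := by
        intro he
        apply hσ
        ext i
        have := congrFun (Finsupp.equivFunOnFinite.symm.injective he) i
        have h2 : ((i : Fin n) : ℕ) = ((σ i : Fin n) : ℕ) :=
          Nat.pow_right_injective hp1 this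
        exact h2.symm
      simp [coeff_monomial, Ne.symm hne]
    · simp
  rw [h] at hc
  simp at hc

lemma Lns0_eq (p n : ℕ) [Fact p.Prime] : Lns p n 0 = (Ln p n) ^ p := by
  haveI : ExpChar (MvPolynomial (Fin n) (ZMod p)) p :=
    ExpChar.prime (Fact.out : p.Prime)
  have := (frobenius (MvPolynomial (Fin n) (ZMod p)) p).map_det
    (Matrix.of fun k j : Fin n => (X j : MvPolynomial (Fin n) (ZMod p)) ^ p ^ ((k : Fin n) : ℕ))
  have hf : (Ln p n) ^ p = Lns p n 0 := by
    rw [show ((Ln p n) ^ p : MvPolynomial (Fin n) (ZMod p))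
        = frobenius (MvPolynomial (Fin n) (ZMod p)) p (Ln p n) from rfl, Ln, bracket, this,
      Lns, bracket]
    congr 1
    ext k j
    simp [frobenius_def, ← pow_mul, pow_succ]
  exact hf.symm

theorem stmt2 (p n : ℕ) [Fact p.Prime] (hn : 1 ≤ n)
    (Q0 : MvPolynomial (Fin n) (ZMod p)) (hQ0 : Lns p n 0 = Ln p n * Q0) :
    Q0 = (Ln p n) ^ (p - 1) := by
  have hp1 : 1 ≤ p := (Fact.out : p.Prime).one_lt.le
  apply mul_left_cancel₀ (Ln_ne_zero p n)
  rw [← hQ0, Lns0_eq]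
  rw [← pow_succ']
  congr 1
  omega
end

section
/- For all i ≥ 1 and 0 ≤ s < n, D_i(Q_{n,0}) = (-1)^n R_{n,i}^p Q_{n,0}^2, where R_{n,i} = [0,1,...,n-2, i-1]/L_n. -/
open MvPolynomial Matrix Finset

/- ## Auxiliary lemmas -/

lemma bracket_succ (p n : ℕ) [Fact p.Prime] (e : Fin n → ℕ) :
    bracket p n (fun k => e k + 1) = bracket p n e ^ p := by
  unfold bracket
  have h := RingHom.map_det (frobenius (MvPolynomial (Fin n) (ZMod p)) p)
      (Matrix.of fun k j : Fin n => (X j : MvPolynomial (Fin n) (ZMod p)) ^ p ^ (e k))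
  rw [frobenius_def] at h
  rw [h]
  rw [RingHom.mapMatrix_apply]
  congr 1
  ext k j
  simp [frobenius_def, ← pow_mul, pow_succ]

lemma D_prod {R A : Type*} [CommRing R] [CommRing A] [Algebra R A]
    (D : Derivation R A A) {ι : Type*} [DecidableEq ι] (s : Finset ι) (f : ι → A) :
    D (∏ j ∈ s, f j) = ∑ j ∈ s, D (f j) * ∏ k ∈ s.erase j, f k := by
  induction s using Finset.induction with
  | empty => simp
  | @insert a s ha ih =>
      rw [Finset.prod_insert ha, D.leibniz, ih, smul_eq_mul, smul_eq_mul,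
        Finset.sum_insert ha, Finset.erase_insert ha, Finset.mul_sum]
      rw [add_comm, mul_comm]
      congr 1
      apply Finset.sum_congr rfl
      intro j hj
      rw [Finset.erase_insert_of_ne (by rintro rfl; exact ha hj),
        Finset.prod_insert (fun h => ha (Finset.mem_of_mem_erase h))]
      ring

lemma D_pow_p {p n i : ℕ} [Fact p.Prime] (a : MvPolynomial (Fin n) (ZMod p)) :
    Dop p n i (a ^ p) = 0 := by
  rw [Derivation.leibniz_pow]
  have : (p : MvPolynomial (Fin n) (ZMod p)) = 0 := by
    exact_mod_cast CharP.cast_eq_zero (MvPolynomial (Fin n) (ZMod p)) p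
  rw [nsmul_eq_mul, this, zero_mul]

lemma D_pow_ppow {p n i : ℕ} [Fact p.Prime] (a : MvPolynomial (Fin n) (ZMod p)) {e : ℕ}
    (he : 1 ≤ e) : Dop p n i (a ^ p ^ e) = 0 := by
  obtain ⟨f, rfl⟩ : ∃ f, e = f + 1 := ⟨e - 1, by omega⟩
  rw [pow_succ, pow_mul, D_pow_p]

lemma prod_X_pow (p n : ℕ) (f : Fin n → ℕ) :
    (∏ j : Fin n, (X j : MvPolynomial (Fin n) (ZMod p)) ^ f j) =
      monomial (Finsupp.equivFunOnFinite.symm f) 1 := by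
  rw [← MvPolynomial.prod_X_pow_eq_monomial]
  exact (Finset.prod_subset (Finset.subset_univ _) fun j _ hj => by
    have h0 : f j = 0 := Finsupp.notMem_support_iff.mp hj
    simp [h0]).symm

lemma D_Ln (p m i : ℕ) [Fact p.Prime] :
    Dop p (m+1) i (Ln p (m+1)) =
      (Matrix.of fun k j : Fin (m+1) =>
        (X j : MvPolynomial (Fin (m+1)) (ZMod p)) ^ p ^ (if (k : ℕ) = 0 then i else (k : ℕ))).det := by
  rw [Ln, bracket, Matrix.det_apply, Matrix.det_apply, map_sum]
  apply Finset.sum_congr rfl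
  intro σ _
  simp only [Matrix.of_apply]
  rw [Units.smul_def, Units.smul_def, map_zsmul]
  congr 1
  rw [D_prod]
  rw [Finset.sum_eq_single (σ⁻¹ 0)]
  · rw [← Finset.mul_prod_erase Finset.univ
      (fun j => (X j : MvPolynomial (Fin (m+1)) (ZMod p)) ^ p ^ (if ((σ j : Fin (m+1)) : ℕ) = 0 then i else ((σ j : Fin (m+1)) : ℕ)))
      (Finset.mem_univ (σ⁻¹ 0))]
    congr 1
    · rw [Equiv.Perm.inv_def, Equiv.apply_symm_apply]
      norm_num [Dop, MvPolynomial.mkDerivation_X]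
    · apply Finset.prod_congr rfl
      intro j hj
      have hne : σ j ≠ 0 := by
        intro hEq
        exact (Finset.ne_of_mem_erase hj) (by rw [← hEq, Equiv.Perm.inv_def, Equiv.symm_apply_apply])
      rw [if_neg (fun hv => hne (Fin.ext (by simp [hv])))]
  · intro j _ hj
    have hne : ((σ j : Fin (m+1)) : ℕ) ≠ 0 := by
      intro hv
      exact hj (by rw [show (0:Fin (m+1)) = σ j from (Fin.ext (by simp [hv])).symm, Equiv.Perm.inv_def, Equiv.symm_apply_apply])
    rw [D_pow_ppow _ (by omega), zero_mul]
  · intro h; exact absurd (Finset.mem_univ _) h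


theorem stmt9 (p n : ℕ) [Fact p.Prime] (hn : 1 ≤ n)
    (Q : ℕ → MvPolynomial (Fin n) (ZMod p))
    (hQ : ∀ s < n, Lns p n s = Ln p n * Q s)
    (R : ℕ → MvPolynomial (Fin n) (ZMod p))
    (hR : ∀ i, 1 ≤ i →
      bracket p n (fun k => if (k : ℕ) = n - 1 then i - 1 else (k : ℕ)) = Ln p n * R i)
    (i : ℕ) (hi : 1 ≤ i) :
    Dop p n i (Q 0) =
      (-1 : MvPolynomial (Fin n) (ZMod p)) ^ n * (R i) ^ p * (Q 0) ^ 2 := by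
  obtain ⟨m, rfl⟩ : ∃ m, n = m + 1 := ⟨n - 1, by omega⟩
  set L : MvPolynomial (Fin (m+1)) (ZMod p) := Ln p (m+1) with hL
  -- Step 1 : L^p = L * Q 0
  have hLp : L ^ p = L * Q 0 := by
    have h0 := hQ 0 (by omega)
    have h1 : Lns p (m+1) 0 = bracket p (m+1) (fun k => (k : ℕ) + 1) := by
      unfold Lns; congr 1
    rw [h1, bracket_succ] at h0
    exact h0
  -- Step 2 : D L = (-1)^m * (L * R i)^p
  have hR' := hR i hi
  simp only [Nat.add_sub_cancel] at hR'
  have hDL : Dop p (m+1) i L = (-1 : MvPolynomial (Fin (m+1)) (ZMod p)) ^ m * (L * R i) ^ p := by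
    rw [hL, D_Ln]
    set M' : Matrix (Fin (m+1)) (Fin (m+1)) (MvPolynomial (Fin (m+1)) (ZMod p)) :=
      Matrix.of fun k j : Fin (m+1) =>
        (X j : MvPolynomial (Fin (m+1)) (ZMod p)) ^ p ^ (if (k : ℕ) = 0 then i else (k : ℕ)) with hM'
    set B : Matrix (Fin (m+1)) (Fin (m+1)) (MvPolynomial (Fin (m+1)) (ZMod p)) :=
      Matrix.of fun k j : Fin (m+1) =>
        (X j : MvPolynomial (Fin (m+1)) (ZMod p)) ^ p ^ ((if (k : ℕ) = m then i - 1 else (k : ℕ)) + 1) with hB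
    have hsub : M'.submatrix (finRotate (m+1)) id = B := by
      ext k j
      simp only [Matrix.submatrix_apply, id, hM', hB, Matrix.of_apply, finRotate_succ_apply]
      congr 2
      rw [Fin.val_add_one]
      by_cases hk : k = Fin.last m
      · have hkm : (k : ℕ) = m := by rw [hk]; rfl
        rw [if_pos hk, if_pos hkm, if_pos rfl]
        congr 1
        omega
      · have hkm : (k : ℕ) ≠ m := fun h => hk (Fin.ext (by simpa using h))
        rw [if_neg hk, if_neg (by omega), if_neg hkm]
    have hperm := Matrix.det_permute (finRotate (m+1)) M'
    rw [hsub, sign_finRotate, Nat.add_sub_cancel] at hperm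
    have hcast : (((-1 : ℤˣ) ^ m : ℤˣ) : MvPolynomial (Fin (m+1)) (ZMod p)) = (-1 : MvPolynomial (Fin (m+1)) (ZMod p)) ^ m := by push_cast; ring
    have hBdet : B.det = bracket p (m+1)
        (fun k => (if (k : ℕ) = m then i - 1 else (k : ℕ)) + 1) := rfl
    have hBval : B.det = (L * R i) ^ p := by
      rw [hBdet, bracket_succ, hR']
    have hone : (-1 : MvPolynomial (Fin (m+1)) (ZMod p)) ^ m * (-1 : MvPolynomial (Fin (m+1)) (ZMod p)) ^ m = 1 := by
      rw [← pow_add, ← two_mul, pow_mul]; norm_num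
    calc M'.det = ((-1 : MvPolynomial (Fin (m+1)) (ZMod p)) ^ m * (-1 : MvPolynomial (Fin (m+1)) (ZMod p)) ^ m) * M'.det := by rw [hone, one_mul]
      _ = (-1 : MvPolynomial (Fin (m+1)) (ZMod p)) ^ m * (((-1 : ℤˣ) ^ m : ℤˣ) * M'.det : MvPolynomial (Fin (m+1)) (ZMod p)) := by rw [hcast]; ring
      _ = (-1 : MvPolynomial (Fin (m+1)) (ZMod p)) ^ m * B.det := by rw [← hperm]
      _ = (-1 : MvPolynomial (Fin (m+1)) (ZMod p)) ^ m * (L * R i) ^ p := by rw [hBval]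
  -- Step 3 : differentiate L^p = L * Q 0
  have hmain := congrArg (Dop p (m+1) i) hLp
  rw [D_pow_p, Derivation.leibniz, smul_eq_mul, smul_eq_mul] at hmain
  -- Step 4 : conclude
  have key : L * Dop p (m+1) i (Q 0) =
      L * ((-1 : MvPolynomial (Fin (m+1)) (ZMod p)) ^ (m+1) * (R i) ^ p * (Q 0) ^ 2) := by
    have h1 : L * Dop p (m+1) i (Q 0) = - (Q 0 * Dop p (m+1) i L) := by
      rw [eq_comm] at hmain
      linear_combination hmain
    rw [h1, hDL, mul_pow, hLp]
    ring
  exact mul_left_cancel₀ (Ln_ne_zero p (m+1)) key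
end
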